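/- For every k ∈ (0,∞) with k ≠ 1, ∫₀^{π/2} θ^{2λ−1} / [ (1−k)² + kθ² ]^{λ+1} dθ = k^{−λ}(1−k)^{−2} · ( 1/(2λ) − T(k) ), where T(k) := ∫_{π√k/(2|1−k|)}^∞ β^{2λ−1}/(1+β²)^{λ+1} dβ satisfies 0 < T(k) < (2/π²)·(k−1)²/k. -/

import Mathlib

open MeasureTheory Real Set Filter Topology

lemma aux_deriv (lam a b : ℝ) (hlam : 0 < lam) (ha : 0 < a) (hb : 0 ≤ b) (x : ℝ) (hx : 0 < x) :
    HasDerivAt (fun θ : ℝ => (θ^2 / (a + b*θ^2)) ^ lam / (2*lam*a))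
      (x ^ (2*lam-1) / ((a + b*x^2)^(lam+1))) x := by
  have hD : 0 < a + b*x^2 := by positivity
  have h1 : HasDerivAt (fun θ : ℝ => θ^2 / (a + b*θ^2))
      ((2*x*(a + b*x^2) - x^2*(b*(2*x))) / (a + b*x^2)^2) x := by
    have := (hasDerivAt_pow 2 x).div
      (((hasDerivAt_pow 2 x).const_mul b).const_add a) hD.ne'
    refine this.congr_deriv ?_
    push_cast
    ring
  have h2 := (h1.rpow_const (p := lam) (Or.inl (by positivity))).div_const (2*lam*a)
  refine h2.congr_deriv ?_
  rw [Real.div_rpow (sq_nonneg x) hD.le]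
  have e1 : (x^2 : ℝ) ^ (lam - 1) = x ^ (2*lam - 1) / x ^ (1:ℝ) := by
    rw [← Real.rpow_natCast x 2, ← Real.rpow_mul hx.le, ← Real.rpow_sub hx]
    norm_num
    ring_nf
  have e2 : (a + b*x^2) ^ (lam - 1) = (a + b*x^2) ^ (lam + 1) / (a + b*x^2) ^ (2:ℝ) := by
    rw [← Real.rpow_sub hD]
    ring_nf
  have e3 : ((a + b*x^2):ℝ) ^ (2:ℝ) = (a + b*x^2) ^ (2:ℕ) := by
    rw [show (2:ℝ) = ((2:ℕ):ℝ) by norm_num, Real.rpow_natCast]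
  have e4 : x ^ (1:ℝ) = x := Real.rpow_one x
  rw [e1, e2, e3, e4]
  have hne1 : x ^ (2*lam-1) ≠ 0 := (Real.rpow_pos_of_pos hx _).ne'
  have hne2 : (a + b*x^2) ^ (lam+1) ≠ 0 := (Real.rpow_pos_of_pos hD _).ne'
  field_simp
  ring

lemma aux_bernoulli (lam t : ℝ) (hlam : 0 < lam) (ht : 0 < t) :
    1 < (1+t) ^ (-lam) + lam * t := by
  have key : StrictMonoOn (fun s : ℝ => (1+s) ^ (-lam) + lam * s) (Ici 0) := by
    apply strictMonoOn_of_deriv_pos (convex_Ici 0)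
    · apply ContinuousOn.add _ (continuous_const.mul continuous_id).continuousOn
      exact (continuous_const.add continuous_id).continuousOn.rpow_const
        (fun x hx => Or.inl (by simp only [mem_Ici] at hx; show (1:ℝ) + x ≠ 0; positivity))
    · intro x hx
      rw [interior_Ici] at hx
      have hx0 : (0:ℝ) < x := hx
      have h1 : HasDerivAt (fun s : ℝ => 1 + s) 1 x := by
        simpa using (hasDerivAt_id x).const_add 1
      have hd := (h1.rpow_const (p := -lam) (Or.inl (by positivity))).add
        ((hasDerivAt_id x).const_mul lam)
      simp only [id_eq] at hd
      have hd' : HasDerivAt (fun s : ℝ => (1+s) ^ (-lam) + lam * s) _ x := hd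
      rw [hd'.deriv]
      have hlt : (1+x) ^ (-lam - 1) < 1 :=
        Real.rpow_lt_one_of_one_lt_of_neg (by linarith) (by linarith)
      have hpos : (0:ℝ) < (1+x) ^ (-lam - 1) :=
        Real.rpow_pos_of_pos (by linarith) _
      simp only [id_eq, mul_one]
      nlinarith
  have := key (mem_Ici.mpr le_rfl) (mem_Ici.mpr ht.le) ht
  simpa using this

lemma aux_Ioi (lam : ℝ) (hlam : 0 < lam) (c : ℝ) (hc : 0 < c) :
    (∫ β in Set.Ioi c, β ^ (2*lam - 1) / ((1 + β^2) ^ (lam + 1)))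
      = 1/(2*lam) - (c^2/(1+c^2)) ^ lam / (2*lam) := by
  have hderiv : ∀ x ∈ Ici c, HasDerivAt (fun β : ℝ => (β^2/(1+β^2))^lam/(2*lam))
      (x ^ (2*lam-1) / ((1 + x^2)^(lam+1))) x := by
    intro x hx
    have := aux_deriv lam 1 1 hlam one_pos zero_le_one x (hc.trans_le hx)
    simpa using this
  have hpos : ∀ x ∈ Ioi c, 0 ≤ x ^ (2*lam-1) / ((1 + x^2)^(lam+1)) := by
    intro x hx
    have hx0 : 0 < x := hc.trans hx
    positivity
  have htend : Tendsto (fun β : ℝ => (β^2/(1+β^2))^lam/(2*lam)) atTop (𝓝 (1/(2*lam))) := by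
    have h1 : Tendsto (fun β : ℝ => β^2/(1+β^2)) atTop (𝓝 1) := by
      have h2 : Tendsto (fun β : ℝ => 1 - 1/(1+β^2)) atTop (𝓝 (1 - 0)) := by
        apply tendsto_const_nhds.sub
        apply Tendsto.div_atTop tendsto_const_nhds
        exact tendsto_atTop_add_const_left _ 1 (tendsto_pow_atTop two_ne_zero)
      rw [sub_zero] at h2
      apply h2.congr
      intro β
      have : (0:ℝ) < 1 + β^2 := by positivity
      field_simp
      ring
    have := h1.rpow_const (p := lam) (Or.inr hlam.le)
    rw [Real.one_rpow] at this
    exact this.div_const _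
  have := integral_Ioi_of_hasDerivAt_of_nonneg' hderiv hpos htend
  rw [this]

lemma aux_interval (lam a b : ℝ) (hlam : 0 < lam) (ha : 0 < a) (hb : 0 ≤ b)
    (X : ℝ) (hX : 0 < X) :
    (∫ θ in (0:ℝ)..X, θ ^ (2*lam - 1) / ((a + b * θ^2) ^ (lam + 1)))
      = (X^2/(a+b*X^2)) ^ lam / (2*lam*a) := by
  have hcont : ContinuousOn (fun θ : ℝ => (θ^2 / (a + b*θ^2)) ^ lam / (2*lam*a)) (Icc 0 X) := by
    apply ContinuousOn.div_const
    apply ContinuousOn.rpow_const _ (fun x _ => Or.inr hlam.le)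
    apply ContinuousOn.div (continuous_pow 2).continuousOn
      (continuous_const.add (continuous_const.mul (continuous_pow 2))).continuousOn
      (fun x _ => by show a + b*x^2 ≠ 0; positivity)
  have hint : IntervalIntegrable (fun θ : ℝ => θ ^ (2*lam - 1) / ((a + b * θ^2) ^ (lam + 1)))
      volume 0 X := by
    have hg : IntervalIntegrable (fun θ : ℝ => θ ^ (2*lam-1) * (a ^ (lam+1))⁻¹)
        volume 0 X :=
      (intervalIntegral.intervalIntegrable_rpow' (by linarith)).mul_const _
    apply hg.mono_fun'
    · rw [Set.uIoc_of_le hX.le]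
      apply ContinuousOn.aestronglyMeasurable _ measurableSet_Ioc
      apply ContinuousOn.div
      · exact continuousOn_id.rpow_const (fun x hx => Or.inl (ne_of_gt hx.1))
      · exact ((continuous_const.add (continuous_const.mul (continuous_pow 2))).continuousOn).rpow_const
          (fun x _ => Or.inr (by linarith))
      · exact fun x hx => (Real.rpow_pos_of_pos (by positivity) _).ne'
    · rw [Set.uIoc_of_le hX.le]
      filter_upwards [ae_restrict_mem measurableSet_Ioc] with θ hθ
      have hθ0 : 0 < θ := hθ.1
      have h1 : a ^ (lam+1) ≤ (a + b*θ^2) ^ (lam+1) :=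
        Real.rpow_le_rpow ha.le (by nlinarith) (by linarith)
      rw [Real.norm_of_nonneg (by positivity), ← div_eq_mul_inv]
      gcongr
  have := intervalIntegral.integral_eq_sub_of_hasDerivAt_of_le hX.le hcont
    (fun x hx => aux_deriv lam a b hlam ha hb x hx.1) hint
  rw [this]
  norm_num [Real.zero_rpow hlam.ne']


/-- For every `k ∈ (0,∞)` with `k ≠ 1`,
`∫₀^{π/2} θ^{2λ-1}/[(1-k)² + kθ²]^{λ+1} dθ = k^{-λ} (1-k)^{-2} (1/(2λ) - T(k))`,
where `T(k) = ∫_{π√k/(2|1-k|)}^∞ β^{2λ-1}/(1+β²)^{λ+1} dβ` satisfies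
`0 < T(k) < (2/π²)(k-1)²/k`. -/
theorem beta_integral_identity (lam : ℝ) (hlam : 0 < lam) (k : ℝ) (hk : 0 < k) (hk1 : k ≠ 1) :
    (∫ θ in (0:ℝ)..(π/2), θ ^ (2*lam - 1) / (((1 - k)^2 + k * θ^2) ^ (lam + 1))) =
      k ^ (-lam) * ((1 - k)^2)⁻¹ *
        (1/(2*lam) - ∫ β in Set.Ioi (π * Real.sqrt k / (2 * |1 - k|)),
          β ^ (2*lam - 1) / ((1 + β^2) ^ (lam + 1))) ∧
    0 < (∫ β in Set.Ioi (π * Real.sqrt k / (2 * |1 - k|)),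
          β ^ (2*lam - 1) / ((1 + β^2) ^ (lam + 1))) ∧
    (∫ β in Set.Ioi (π * Real.sqrt k / (2 * |1 - k|)),
          β ^ (2*lam - 1) / ((1 + β^2) ^ (lam + 1))) < (2/π^2) * (k - 1)^2 / k := by
  have h1k : (1:ℝ) - k ≠ 0 := sub_ne_zero.mpr (Ne.symm hk1)
  have hA : 0 < (1-k)^2 := (sq_nonneg (1-k)).lt_of_ne (Ne.symm (pow_ne_zero 2 h1k))
  set c : ℝ := π * Real.sqrt k / (2 * |1 - k|) with hcdef
  have hc : 0 < c :=
    div_pos (mul_pos pi_pos (Real.sqrt_pos.mpr hk)) (mul_pos two_pos (abs_pos.mpr h1k))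
  have hc2 : c^2 = π^2 * k / (4 * (1-k)^2) := by
    rw [hcdef, div_pow, mul_pow, mul_pow, Real.sq_sqrt hk.le, sq_abs]
    norm_num
  have hIoi := aux_Ioi lam hlam c hc
  have hInt := aux_interval lam ((1-k)^2) k hlam hA hk.le (π/2) (by positivity)
  have hc2pos : (0:ℝ) < 1 + c^2 := by positivity
  refine ⟨?_, ?_, ?_⟩
  · rw [hInt, hIoi]
    have hd1 : (0:ℝ) < (1-k)^2 + k*(π/2)^2 := by positivity
    have hbase : (π/2)^2/((1-k)^2 + k*(π/2)^2) = (c^2/(1+c^2)) / k := by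
      rw [hc2]
      field_simp
      ring
    have hsplit : ((c^2/(1+c^2)) / k) ^ lam = (c^2/(1+c^2)) ^ lam * k ^ (-lam) := by
      rw [Real.div_rpow (by positivity) hk.le, Real.rpow_neg hk.le, div_eq_mul_inv]
    rw [hbase, hsplit]
    field_simp
    ring
  · rw [hIoi]
    have hu1 : c^2/(1+c^2) < 1 := (div_lt_one hc2pos).mpr (by nlinarith)
    have hu2 : (c^2/(1+c^2)) ^ lam < 1 := Real.rpow_lt_one (by positivity) hu1 hlam
    have : (c^2/(1+c^2)) ^ lam / (2*lam) < 1 / (2*lam) := by gcongr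
    linarith
  · rw [hIoi]
    set t : ℝ := 1/c^2 with htdef
    have ht : 0 < t := by positivity
    have heq : c^2/(1+c^2) = (1+t)⁻¹ := by
      rw [htdef]
      field_simp
      ring
    have hut : (c^2/(1+c^2)) ^ lam = (1+t) ^ (-lam) := by
      rw [heq, Real.inv_rpow (by positivity), ← Real.rpow_neg (by positivity)]
    have htgt : (2/π^2) * (k-1)^2/k = t/2 := by
      rw [htdef, hc2]
      have := pi_pos
      field_simp
      ring
    have hb := aux_bernoulli lam t hlam ht
    rw [hut, htgt, ← sub_div, div_lt_iff₀ (by linarith : (0:ℝ) < 2*lam)]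
    nlinarith
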